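/- Let X be a completely metrizable topological space of weight κ ≥ ℵ₀, and let 𝓔 be a countable family of relations on X, each relation R ∈ 𝓔 being a Gδ subset of X^r for some finite arity r ≥ 1. Then exactly one of the following two statements holds: (S) there exists an ordinal γ < κ⁺ such that every 𝓔-clique in X has Cantor–Bendixson rank < γ; (P) there exists a perfect 𝓔-clique in X. -/

import Mathlib

open Set Filter Cardinal FirstOrder

attribute [local instance] Classical.propDecidable

universe u v

/-- A topological space is completely metrizable if its topology is induced by a complete metric. -/
def CompletelyMetrizable (Y : Type*) [t : TopologicalSpace Y] : Prop :=
  ∃ m : MetricSpace Y, m.toUniformSpace.toTopologicalSpace = t ∧ @CompleteSpace Y m.toUniformSpace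

/-- The weight of a topological space: the least cardinality of a topological basis. -/
noncomputable def topWeight (X : Type u) [TopologicalSpace X] : Cardinal.{u} :=
  ⨅ B : { B : Set (Set X) // TopologicalSpace.IsTopologicalBasis B }, Cardinal.mk B.1

/-- A set is dense-in-itself if it is nonempty and has no isolated points
(in the subspace topology). -/
def DenseInItselfSet {X : Type*} [TopologicalSpace X] (S : Set X) : Prop :=
  S.Nonempty ∧ ∀ x ∈ S, AccPt x (𝓟 S)

/-- A set is perfect if it is nonempty, completely metrizable in the subspace topology,
and has no isolated points. -/
def IsPerfectSet {X : Type*} [TopologicalSpace X] (P : Set X) : Prop :=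
  P.Nonempty ∧ CompletelyMetrizable P ∧ ∀ x ∈ P, AccPt x (𝓟 P)

/-- The `γ`-th Cantor–Bendixson derivative of a set: iterate the operation of removing
isolated points, taking intersections at limit stages. -/
noncomputable def cbDeriv {X : Type u} [TopologicalSpace X] (A : Set X) (γ : Ordinal.{v}) :
    Set X :=
  Ordinal.limitRecOn γ A (fun _ ih => { x ∈ ih | AccPt x (𝓟 ih) })
    (fun o _ ih => ⋂ (o' : Ordinal.{v}) (h : o' < o), ih o' h)

/-- `S` is independent with respect to the `n`-ary relation `R`. -/
def IsRelIndep {X : Type*} {n : ℕ} (R : Set (Fin n → X)) (S : Set X) : Prop :=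
  ∀ s : Fin n → X, (∀ i, s i ∈ S) → Function.Injective s → s ∉ R

/-- `S` is a clique with respect to the `n`-ary relation `R`. -/
def IsRelClique {X : Type*} {n : ℕ} (R : Set (Fin n → X)) (S : Set X) : Prop :=
  ∀ s : Fin n → X, (∀ i, s i ∈ S) → Function.Injective s → s ∈ R

/-! ### cbDeriv basics -/

section CB
variable {X : Type u} [TopologicalSpace X] {A : Set X}

theorem cbDeriv_zero (A : Set X) : cbDeriv A (0 : Ordinal.{v}) = A :=
  Ordinal.limitRecOn_zero ..

theorem cbDeriv_succ (A : Set X) (γ : Ordinal.{v}) :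
    cbDeriv A (Order.succ γ) = { x ∈ cbDeriv A γ | AccPt x (𝓟 (cbDeriv A γ)) } :=
  Ordinal.limitRecOn_succ ..

theorem cbDeriv_limit (A : Set X) {γ : Ordinal.{v}} (h : Order.IsSuccLimit γ) :
    cbDeriv A γ = ⋂ (o' : Ordinal.{v}) (_ : o' < γ), cbDeriv A o' :=
  Ordinal.limitRecOn_limit _ _ _ _ h

theorem cbDeriv_antitone (A : Set X) {β γ : Ordinal.{v}} (h : β ≤ γ) :
    cbDeriv A γ ⊆ cbDeriv A β := by
  induction γ using Ordinal.induction with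
  | h γ IH =>
    rcases Ordinal.zero_or_succ_or_isSuccLimit γ with rfl | ⟨δ, rfl⟩ | hlim
    · rw [nonpos_iff_eq_zero.mp h]
    · rcases eq_or_lt_of_le h with rfl | hlt
      · exact subset_rfl
      · have hβδ : β ≤ δ := Order.lt_succ_iff.mp hlt
        refine subset_trans ?_ (IH δ (Order.lt_succ δ) hβδ)
        rw [cbDeriv_succ]
        exact sep_subset _ _
    · rcases eq_or_lt_of_le h with rfl | hlt
      · exact subset_rfl
      · rw [cbDeriv_limit A hlim]
        exact iInter_subset_of_subset β (iInter_subset_of_subset hlt subset_rfl)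

theorem cbDeriv_subset (A : Set X) (γ : Ordinal.{v}) : cbDeriv A γ ⊆ A := by
  have := cbDeriv_antitone A (show (0:Ordinal.{v}) ≤ γ from zero_le)
  rwa [cbDeriv_zero] at this

theorem cbDeriv_of_accPt {P : Set X} (hP : ∀ x ∈ P, AccPt x (𝓟 P)) (γ : Ordinal.{v}) :
    cbDeriv P γ = P := by
  induction γ using Ordinal.induction with
  | h γ IH =>
    rcases Ordinal.zero_or_succ_or_isSuccLimit γ with rfl | ⟨δ, rfl⟩ | hlim
    · exact cbDeriv_zero P
    · rw [cbDeriv_succ, IH δ (Order.lt_succ δ)]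
      exact Set.eq_of_subset_of_subset (sep_subset _ _) (fun x hx => ⟨hx, hP x hx⟩)
    · rw [cbDeriv_limit P hlim]
      refine Set.eq_of_subset_of_subset ?_ ?_
      · refine subset_trans (iInter_subset_of_subset 0 ?_) subset_rfl
        exact iInter_subset_of_subset hlim.pos (by rw [cbDeriv_zero])
      · intro x hx
        refine mem_iInter.mpr fun o' => mem_iInter.mpr fun ho' => ?_
        rw [IH o' ho']
        exact hx
end CB

/-! ### auxiliary metric facts -/

section MAux
variable {X : Type u} [MetricSpace X]

/-- get two distinct points of `A` in any neighborhood of an accumulation point -/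
theorem two_points_of_accPt {A : Set X} {x : X} (h : AccPt x (𝓟 A)) {V : Set X}
    (hV : IsOpen V) (hxV : x ∈ V) :
    ∃ y₁ ∈ A ∩ V, ∃ y₂ ∈ A ∩ V, y₁ ≠ y₂ := by
  rw [accPt_iff_nhds] at h
  obtain ⟨y₁, ⟨hy₁V, hy₁A⟩, hy₁x⟩ := h V (hV.mem_nhds hxV)
  obtain ⟨ε, hε, hball⟩ := Metric.isOpen_iff.mp hV x hxV
  have hmin : (0:ℝ) < min ε (dist y₁ x) := lt_min hε (dist_pos.mpr hy₁x)
  obtain ⟨y₂, ⟨hy₂b, hy₂A⟩, hy₂x⟩ := h (Metric.ball x (min ε (dist y₁ x)))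
    (Metric.ball_mem_nhds x hmin)
  have hy₂V : y₂ ∈ V := hball (Metric.mem_ball.mpr
    (lt_of_lt_of_le (Metric.mem_ball.mp hy₂b) (min_le_left _ _)))
  refine ⟨y₁, ⟨hy₁A, hy₁V⟩, y₂, ⟨hy₂A, hy₂V⟩, ?_⟩
  intro hEq
  have h1 : dist y₂ x < dist y₁ x := lt_of_lt_of_le (Metric.mem_ball.mp hy₂b) (min_le_right _ _)
  rw [hEq] at h1
  exact lt_irrefl _ h1

theorem exists_pos_forall_finset {α : Type*} (s : Finset α) (P : α → ℝ → Prop)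
    (hmono : ∀ a ε ε', 0 < ε' → ε' ≤ ε → P a ε → P a ε')
    (h : ∀ a ∈ s, ∃ ε > 0, P a ε) : ∃ ε > 0, ∀ a ∈ s, P a ε := by
  classical
  induction s using Finset.induction with
  | empty => exact ⟨1, one_pos, by simp⟩
  | @insert a s hx ih =>
    obtain ⟨ε₁, hε₁, h₁⟩ := h a (Finset.mem_insert_self a s)
    obtain ⟨ε₂, hε₂, h₂⟩ := ih (fun b hb => h b (Finset.mem_insert_of_mem hb))
    refine ⟨min ε₁ ε₂, lt_min hε₁ hε₂, fun b hb => ?_⟩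
    rcases Finset.mem_insert.mp hb with rfl | hb
    · exact hmono _ _ _ (lt_min hε₁ hε₂) (min_le_left _ _) h₁
    · exact hmono _ _ _ (lt_min hε₁ hε₂) (min_le_right _ _) (h₂ b hb)

end MAux

/-! ### The combinatorial derivative on configurations -/

section Aux
open TopologicalSpace Metric

variable {X : Type u} [MetricSpace X] {r : ℕ → ℕ}

/-- A configuration: a finite collection of "boxes" together with a precision level. -/
def SecCfg (B : Set (Set X)) (U : ∀ n : ℕ, ℕ → Set (Fin (r n) → X))
    (c : Finset (Set X) × ℕ) : Prop :=
  c.1.Nonempty ∧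
  (∀ b ∈ c.1, b ∈ B ∧ b.Nonempty ∧ ∃ z : X, b ⊆ closedBall z ((1/2)^c.2)) ∧
  (∀ b ∈ c.1, ∀ b' ∈ c.1, b ≠ b' → closure b ∩ closure b' = ∅) ∧
  (∀ n m : ℕ, n ≤ c.2 → m ≤ c.2 → ∀ β : Fin (r n) → Set X, Function.Injective β →
    (∀ i, β i ∈ c.1) → ∀ y : Fin (r n) → X, (∀ i, y i ∈ closure (β i)) → y ∈ U n m)

/-- `c'` doubles `c`: every box of `c'` has closure inside a box of `c`, and every box
of `c` contains (the closures of) at least two boxes of `c'`. -/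
def GDoub (c c' : Finset (Set X) × ℕ) : Prop :=
  c'.2 = c.2 + 1 ∧ (∀ b' ∈ c'.1, ∃ b ∈ c.1, closure b' ⊆ b) ∧
  (∀ b ∈ c.1, ∃ b₁ ∈ c'.1, ∃ b₂ ∈ c'.1, b₁ ≠ b₂ ∧ closure b₁ ⊆ b ∧ closure b₂ ⊆ b)

def gstep (A : Set (Finset (Set X) × ℕ)) : Set (Finset (Set X) × ℕ) :=
  {c ∈ A | ∃ c', GDoub c c' ∧ c' ∈ A}

noncomputable def Gfam (B : Set (Set X)) (U : ∀ n : ℕ, ℕ → Set (Fin (r n) → X))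
    (γ : Ordinal.{u}) : Set (Finset (Set X) × ℕ) :=
  Ordinal.limitRecOn γ {c | SecCfg B U c} (fun _ ih => gstep ih)
    (fun o _ ih => ⋂ (o' : Ordinal.{u}) (h : o' < o), ih o' h)

variable (B : Set (Set X)) (U : ∀ n : ℕ, ℕ → Set (Fin (r n) → X))

theorem Gfam_zero : Gfam B U (0 : Ordinal.{u}) = {c | SecCfg B U c} :=
  Ordinal.limitRecOn_zero ..

theorem Gfam_succ (γ : Ordinal.{u}) : Gfam B U (Order.succ γ) = gstep (Gfam B U γ) :=
  Ordinal.limitRecOn_succ ..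

theorem Gfam_limit {γ : Ordinal.{u}} (h : Order.IsSuccLimit γ) :
    Gfam B U γ = ⋂ (o' : Ordinal.{u}) (_ : o' < γ), Gfam B U o' :=
  Ordinal.limitRecOn_limit _ _ _ _ h

theorem Gfam_antitone {β γ : Ordinal.{u}} (h : β ≤ γ) : Gfam B U γ ⊆ Gfam B U β := by
  induction γ using Ordinal.induction with
  | h γ IH =>
    rcases Ordinal.zero_or_succ_or_isSuccLimit γ with rfl | ⟨δ, rfl⟩ | hlim
    · rw [nonpos_iff_eq_zero.mp h]
    · rcases eq_or_lt_of_le h with rfl | hlt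
      · exact subset_rfl
      · have hβδ : β ≤ δ := Order.lt_succ_iff.mp hlt
        refine subset_trans ?_ (IH δ (Order.lt_succ δ) hβδ)
        rw [Gfam_succ]
        exact sep_subset _ _
    · rcases eq_or_lt_of_le h with rfl | hlt
      · exact subset_rfl
      · rw [Gfam_limit B U hlim]
        exact iInter_subset_of_subset β (iInter_subset_of_subset hlt subset_rfl)

theorem Gfam_subset_sec (γ : Ordinal.{u}) {c} (hc : c ∈ Gfam B U γ) : SecCfg B U c := by
  have := Gfam_antitone B U (show (0:Ordinal.{u}) ≤ γ from zero_le) hc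
  rwa [Gfam_zero] at this

end Aux

/-! ### The base construction: secured configurations around finite subsets of cliques -/

section Base
open TopologicalSpace Metric

variable {X : Type u} [MetricSpace X] {r : ℕ → ℕ}
variable {B : Set (Set X)} {U : ∀ n : ℕ, ℕ → Set (Fin (r n) → X)}
variable {R : ∀ n : ℕ, Set (Fin (r n) → X)}

theorem base_cfg (hB : TopologicalSpace.IsTopologicalBasis B) (hU : ∀ n m, IsOpen (U n m))
    (hRU : ∀ n, R n = ⋂ m, U n m)
    {S : Set X} (hS : ∀ n, IsRelClique (R n) S)
    (T : Finset X) (hTne : T.Nonempty) (hTS : ↑T ⊆ S)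
    (W : X → Set X) (hWo : ∀ x ∈ T, IsOpen (W x)) (hWx : ∀ x ∈ T, x ∈ W x) (ℓ : ℕ) :
    ∃ f : X → Set X, Set.InjOn f ↑T ∧
      (∀ x ∈ T, f x ∈ B ∧ x ∈ f x ∧ closure (f x) ⊆ W x) ∧
      SecCfg B U (T.image f, ℓ) := by
  classical
  -- separation radius
  obtain ⟨ε₁, hε₁, hsep⟩ : ∃ ε₁ > 0, ∀ p ∈ T ×ˢ T, p.1 ≠ p.2 → 2*ε₁ < dist p.1 p.2 := by
    apply exists_pos_forall_finset
    · intro a ε ε' hε' hle h hne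
      have := h hne; linarith
    · intro p _
      by_cases hpq : p.1 = p.2
      · exact ⟨1, one_pos, fun h => absurd hpq h⟩
      · refine ⟨dist p.1 p.2 / 5, by have := dist_pos.mpr hpq; linarith, fun _ => by
          have := dist_pos.mpr hpq; linarith⟩
  -- security radius
  obtain ⟨ε₂, hε₂, hsec⟩ : ∃ ε₂ > 0, ∀ nm ∈ (Finset.range (ℓ+1)) ×ˢ (Finset.range (ℓ+1)),
      ∀ g : Fin (r nm.1) → X, Function.Injective g → (∀ i, g i ∈ T) →
      ∀ y : Fin (r nm.1) → X, (∀ i, dist (y i) (g i) ≤ ε₂) → y ∈ U nm.1 nm.2 := by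
    apply exists_pos_forall_finset
    · intro a ε ε' hε' hle h g hg hgT y hy
      exact h g hg hgT y (fun i => (hy i).trans hle)
    · rintro ⟨n, m⟩ _
      obtain ⟨ε₃, hε₃, hsec'⟩ : ∃ ε₃ > 0, ∀ g ∈ (Finset.univ : Finset (Fin (r n) → ↥T)),
          Function.Injective (fun i => (g i : X)) →
          ∀ y : Fin (r n) → X, (∀ i, dist (y i) (g i : X) ≤ ε₃) → y ∈ U n m := by
        apply exists_pos_forall_finset Finset.univ
          (fun (g : Fin (r n) → ↥T) ε => Function.Injective (fun i => (g i : X)) →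
            ∀ y : Fin (r n) → X, (∀ i, dist (y i) (g i : X) ≤ ε) → y ∈ U n m)
        · intro a ε ε' hε' hle h hg y hy
          exact h hg y (fun i => (hy i).trans hle)
        · intro g _
          by_cases hg : Function.Injective (fun i => (g i : X))
          · have hmem : (fun i => (g i : X)) ∈ R n :=
              hS n _ (fun i => hTS (g i).2) hg
            have hmemU : (fun i => (g i : X)) ∈ U n m := by
              rw [hRU n] at hmem; exact mem_iInter.mp hmem m
            obtain ⟨ε, hε, hball⟩ := Metric.isOpen_iff.mp (hU n m) _ hmemU
            refine ⟨ε/2, by positivity, fun _ y hy => hball ?_⟩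
            rw [mem_ball, dist_pi_lt_iff hε]
            exact fun i => lt_of_le_of_lt (hy i) (by linarith)
          · exact ⟨1, one_pos, fun h => absurd h hg⟩
      refine ⟨ε₃, hε₃, fun g hg hgT y hy => ?_⟩
      have := hsec' (fun i => ⟨g i, hgT i⟩) (Finset.mem_univ _) hg y hy
      exact this
  set ε : ℝ := min ε₁ (min ε₂ ((1/2)^ℓ)) with hεdef
  have hε : 0 < ε := lt_min hε₁ (lt_min hε₂ (by positivity))
  have hεε₁ : ε ≤ ε₁ := min_le_left _ _
  have hεε₂ : ε ≤ ε₂ := (min_le_right _ _).trans (min_le_left _ _)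
  have hεℓ : ε ≤ (1/2)^ℓ := (min_le_right _ _).trans (min_le_right _ _)
  -- choose boxes
  have hbox : ∀ x ∈ T, ∃ b, b ∈ B ∧ x ∈ b ∧ b ⊆ ball x (ε/2) ∧ closure b ⊆ W x := by
    intro x hx
    obtain ⟨ρ, hρ, hρW⟩ := Metric.isOpen_iff.mp (hWo x hx) x (hWx x hx)
    obtain ⟨b, hbB, hxb, hbsub⟩ := hB.exists_subset_of_mem_open
      (Metric.mem_ball_self (show (0:ℝ) < min (ε/2) (ρ/2) from lt_min (by linarith) (by linarith)))
      Metric.isOpen_ball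
    refine ⟨b, hbB, hxb, fun y hy => ?_, ?_⟩
    · exact Metric.mem_ball.mpr (lt_of_lt_of_le (Metric.mem_ball.mp (hbsub hy))
        (min_le_left _ _))
    · refine subset_trans (closure_mono hbsub) ?_
      refine subset_trans Metric.closure_ball_subset_closedBall (fun y hy => hρW ?_)
      have : dist y x ≤ min (ε/2) (ρ/2) := Metric.mem_closedBall.mp hy
      exact Metric.mem_ball.mpr (lt_of_le_of_lt (this.trans (min_le_right _ _)) (by linarith))
  set f : X → Set X := fun x => if h : x ∈ T then (hbox x h).choose else ∅ with hfdef
  have hf : ∀ x ∈ T, f x ∈ B ∧ x ∈ f x ∧ f x ⊆ ball x (ε/2) ∧ closure (f x) ⊆ W x := by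
    intro x hx
    simp only [hfdef, dif_pos hx]
    exact (hbox x hx).choose_spec
  have hfcb : ∀ x ∈ T, closure (f x) ⊆ closedBall x (ε/2) := fun x hx =>
    (closure_mono (hf x hx).2.2.1).trans Metric.closure_ball_subset_closedBall
  have hinj : Set.InjOn f ↑T := by
    intro x hx y hy hxy
    by_contra hne
    have h2 : 2*ε₁ < dist x y := hsep (x, y) (Finset.mem_product.mpr ⟨hx, hy⟩) hne
    have hyfx : y ∈ f x := hxy ▸ (hf y hy).2.1
    have : dist y x < ε/2 := Metric.mem_ball.mp ((hf x hx).2.2.1 hyfx)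
    rw [dist_comm] at this
    have hεle := hεε₁
    linarith
  refine ⟨f, hinj, fun x hx => ⟨(hf x hx).1, (hf x hx).2.1, (hf x hx).2.2.2⟩, ?_, ?_, ?_, ?_⟩
  · exact hTne.image f
  · rintro b hb
    obtain ⟨x, hx, rfl⟩ := Finset.mem_image.mp hb
    refine ⟨(hf x hx).1, ⟨x, (hf x hx).2.1⟩, x, fun y hy => ?_⟩
    have : dist y x < ε/2 := Metric.mem_ball.mp ((hf x hx).2.2.1 hy)
    exact Metric.mem_closedBall.mpr (le_trans this.le (by linarith))
  · rintro b hb b' hb' hbb'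
    obtain ⟨x, hx, rfl⟩ := Finset.mem_image.mp hb
    obtain ⟨y, hy, rfl⟩ := Finset.mem_image.mp hb'
    have hxy : x ≠ y := fun h => hbb' (by rw [h])
    rw [Set.eq_empty_iff_forall_notMem]
    rintro z ⟨hz1, hz2⟩
    have d1 : dist z x ≤ ε/2 := Metric.mem_closedBall.mp (hfcb x hx hz1)
    have d2 : dist z y ≤ ε/2 := Metric.mem_closedBall.mp (hfcb y hy hz2)
    have h2 : 2*ε₁ < dist x y := hsep (x, y) (Finset.mem_product.mpr ⟨hx, hy⟩) hxy
    have : dist x y ≤ dist z x + dist z y := by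
      rw [dist_comm z x]; exact dist_triangle x z y
    have hεle := hεε₁
    linarith
  · rintro n m hn hm β hβinj hβmem y hy
    have hmem' : ∀ i, ∃ x, x ∈ T ∧ f x = β i := by
      intro i
      obtain ⟨x, hx, hfx⟩ := Finset.mem_image.mp (hβmem i)
      exact ⟨x, hx, hfx⟩
    choose g hgT hgf using hmem'
    have hginj : Function.Injective g := by
      intro i j hij
      by_contra hne
      exact hne (hβinj (by rw [← hgf i, ← hgf j, hij]))
    refine hsec (n, m) (Finset.mem_product.mpr
      ⟨Finset.mem_range.mpr (Nat.lt_succ_of_le hn), Finset.mem_range.mpr (Nat.lt_succ_of_le hm)⟩)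
      g hginj hgT y (fun i => ?_)
    have : y i ∈ closure (f (g i)) := by rw [hgf i]; exact hy i
    have := Metric.mem_closedBall.mp (hfcb (g i) (hgT i) this)
    linarith [hεε₂]
end Base

/-! ### The transfer lemma: clique derivatives produce surviving configurations -/

section Transfer
open TopologicalSpace Metric

variable {X : Type u} [MetricSpace X] {r : ℕ → ℕ}
variable {B : Set (Set X)} {U : ∀ n : ℕ, ℕ → Set (Fin (r n) → X)}
variable {R : ∀ n : ℕ, Set (Fin (r n) → X)}

theorem transfer_cfg (hB : TopologicalSpace.IsTopologicalBasis B) (hU : ∀ n m, IsOpen (U n m))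
    (hRU : ∀ n, R n = ⋂ m, U n m)
    {S : Set X} (hS : ∀ n, IsRelClique (R n) S) (α : Ordinal.{u}) :
    ∀ c, SecCfg B U c → (∀ b ∈ c.1, (b ∩ cbDeriv S α).Nonempty) → c ∈ Gfam B U α := by
  induction α using Ordinal.induction with
  | h α IH =>
  rcases Ordinal.zero_or_succ_or_isSuccLimit α with rfl | ⟨δ, rfl⟩ | hlim
  · intro c hc _
    rw [Gfam_zero]
    exact hc
  · intro c hc hmeet
    rw [Gfam_succ]
    refine ⟨IH δ (Order.lt_succ δ) c hc (fun b hb => ?_), ?_⟩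
    · obtain ⟨x, hx1, hx2⟩ := hmeet b hb
      exact ⟨x, hx1, cbDeriv_antitone S (Order.le_succ δ) hx2⟩
    · -- construct a doubling configuration
      set D := cbDeriv S δ with hD
      have hpts : ∀ b ∈ c.1, ∃ y₁, y₁ ∈ D ∩ b ∧ ∃ y₂, y₂ ∈ D ∩ b ∧ y₁ ≠ y₂ := by
        intro b hb
        obtain ⟨x, hxb, hx2⟩ := hmeet b hb
        rw [cbDeriv_succ] at hx2
        obtain ⟨hxD, hxAcc⟩ := hx2
        have hbopen : IsOpen b := hB.isOpen (hc.2.1 b hb).1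
        obtain ⟨y₁, hy₁, y₂, hy₂, hne⟩ := two_points_of_accPt hxAcc hbopen hxb
        exact ⟨y₁, hy₁, y₂, hy₂, hne⟩
      have hXne : Nonempty X := by
        obtain ⟨b₀, hb₀⟩ := hc.1
        exact ⟨(hc.2.1 b₀ hb₀).2.1.some⟩
      choose! p1 hp1 p2 hp2 hpne using hpts
      set T : Finset X := c.1.biUnion (fun b => {p1 b, p2 b}) with hTdef
      have hTmem : ∀ y ∈ T, ∃ b ∈ c.1, y = p1 b ∨ y = p2 b := by
        intro y hy
        obtain ⟨b, hb, hyb⟩ := Finset.mem_biUnion.mp hy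
        rcases Finset.mem_insert.mp hyb with h | h
        · exact ⟨b, hb, Or.inl h⟩
        · exact ⟨b, hb, Or.inr (Finset.mem_singleton.mp h)⟩
      have hTD : ∀ y ∈ T, y ∈ D := by
        intro y hy
        obtain ⟨b, hb, h⟩ := hTmem y hy
        rcases h with rfl | rfl
        · exact (hp1 b hb).1
        · exact (hp2 b hb).1
      have hTS : ↑T ⊆ S := fun y hy => cbDeriv_subset S δ (hTD y hy)
      have hTne : T.Nonempty := by
        obtain ⟨b, hb⟩ := hc.1
        exact ⟨p1 b, Finset.mem_biUnion.mpr ⟨b, hb, Finset.mem_insert_self _ _⟩⟩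
      set W : X → Set X := fun y => if h : ∃ b, b ∈ c.1 ∧ y ∈ b then h.choose else univ
        with hWdef
      have hWT : ∀ y ∈ T, ∃ b, b ∈ c.1 ∧ y ∈ b := by
        intro y hy
        obtain ⟨b, hb, h⟩ := hTmem y hy
        rcases h with rfl | rfl
        · exact ⟨b, hb, (hp1 b hb).2⟩
        · exact ⟨b, hb, (hp2 b hb).2⟩
      have hWmem : ∀ y, (∃ b, b ∈ c.1 ∧ y ∈ b) → W y ∈ c.1 ∧ y ∈ W y := by
        intro y h
        simp only [hWdef, dif_pos h]
        exact h.choose_spec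
      have hWuniq : ∀ y b, b ∈ c.1 → y ∈ b → W y = b := by
        intro y b hb hyb
        have h : ∃ b, b ∈ c.1 ∧ y ∈ b := ⟨b, hb, hyb⟩
        obtain ⟨hW1, hW2⟩ := hWmem y h
        by_contra hne
        have := hc.2.2.1 (W y) hW1 b hb hne
        exact absurd this (Set.nonempty_iff_ne_empty.mp
          ⟨y, subset_closure hW2, subset_closure hyb⟩)
      have hWo : ∀ y ∈ T, IsOpen (W y) := by
        intro y hy
        obtain ⟨hW1, _⟩ := hWmem y (hWT y hy)
        exact hB.isOpen (hc.2.1 _ hW1).1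
      have hWx : ∀ y ∈ T, y ∈ W y := fun y hy => (hWmem y (hWT y hy)).2
      obtain ⟨f, hinj, hfprop, hfsec⟩ := base_cfg hB hU hRU hS T hTne hTS W hWo hWx (c.2 + 1)
      refine ⟨(T.image f, c.2 + 1), ⟨rfl, ?_, ?_⟩, ?_⟩
      · rintro b' hb'
        obtain ⟨y, hy, rfl⟩ := Finset.mem_image.mp hb'
        exact ⟨W y, (hWmem y (hWT y hy)).1, (hfprop y hy).2.2⟩
      · intro b hb
        have hm1 : p1 b ∈ T := Finset.mem_biUnion.mpr ⟨b, hb, Finset.mem_insert_self _ _⟩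
        have hm2 : p2 b ∈ T := Finset.mem_biUnion.mpr
          ⟨b, hb, Finset.mem_insert_of_mem (Finset.mem_singleton_self _)⟩
        refine ⟨f (p1 b), Finset.mem_image_of_mem f hm1, f (p2 b),
          Finset.mem_image_of_mem f hm2, ?_, ?_, ?_⟩
        · intro hEq
          exact hpne b hb (hinj hm1 hm2 hEq)
        · have := (hfprop (p1 b) hm1).2.2
          rwa [hWuniq (p1 b) b hb (hp1 b hb).2] at this
        · have := (hfprop (p2 b) hm2).2.2
          rwa [hWuniq (p2 b) b hb (hp2 b hb).2] at this
      · refine IH δ (Order.lt_succ δ) _ hfsec (fun b' hb' => ?_)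
        obtain ⟨y, hy, rfl⟩ := Finset.mem_image.mp hb'
        exact ⟨y, (hfprop y hy).2.1, hTD y hy⟩
  · intro c hc hmeet
    rw [Gfam_limit B U hlim]
    refine mem_iInter.mpr fun δ => mem_iInter.mpr fun hδ => IH δ hδ c hc (fun b hb => ?_)
    obtain ⟨x, hx1, hx2⟩ := hmeet b hb
    exact ⟨x, hx1, cbDeriv_antitone S hδ.le hx2⟩
end Transfer

/-! ### Stabilization of the configuration derivative -/

section Stab
variable {X : Type u} [MetricSpace X] {r : ℕ → ℕ}
variable (B : Set (Set X)) (U : ∀ n : ℕ, ℕ → Set (Fin (r n) → X))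

theorem exists_stab {κ : Cardinal.{u}} (hκ : ℵ₀ ≤ κ) (hBcard : #↥B = κ) :
    ∃ γ₀ : Ordinal.{u}, γ₀ < (Order.succ κ).ord ∧
      Gfam B U γ₀ = Gfam B U (Order.succ γ₀) := by
  by_contra hcon
  push_neg at hcon
  have hdrop : ∀ α : Ordinal.{u}, α < (Order.succ κ).ord →
      ∃ c, c ∈ Gfam B U α ∧ c ∉ Gfam B U (Order.succ α) := by
    intro α hα
    have hne := hcon α hα
    have hsub : Gfam B U (Order.succ α) ⊆ Gfam B U α := Gfam_antitone B U (Order.le_succ α)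
    by_contra h
    push_neg at h
    exact hne (Set.eq_of_subset_of_subset (fun c hc => h c hc) hsub)
  choose cfun hc1 hc2 using hdrop
  -- cfun is injective
  have hcinj : ∀ α (hα : α < (Order.succ κ).ord) α' (hα' : α' < (Order.succ κ).ord),
      cfun α hα = cfun α' hα' → α = α' := by
    intro α hα α' hα' hEq
    by_contra hne
    rcases lt_or_gt_of_ne hne with hlt | hlt
    · have : cfun α' hα' ∈ Gfam B U (Order.succ α) :=
        Gfam_antitone B U (Order.succ_le_of_lt hlt) (hc1 α' hα')
      rw [← hEq] at this
      exact hc2 α hα this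
    · have : cfun α hα ∈ Gfam B U (Order.succ α') :=
        Gfam_antitone B U (Order.succ_le_of_lt hlt) (hc1 α hα)
      rw [hEq] at this
      exact hc2 α' hα' this
  -- embed into Finset ↥B × ℕ
  have hBmem : ∀ α (hα : α < (Order.succ κ).ord), ∀ b ∈ (cfun α hα).1, b ∈ B := by
    intro α hα b hb
    exact ((Gfam_subset_sec B U α (hc1 α hα)).2.1 b hb).1
  let e : ↥(Set.Iio ((Order.succ κ).ord)) → Finset ↥B × ℕ := fun a =>
    ((cfun a.1 a.2).1.subtype (· ∈ B), (cfun a.1 a.2).2)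
  have he : Function.Injective e := by
    intro a a' hEq
    have h1 : (cfun a.1 a.2).1 = (cfun a'.1 a'.2).1 := by
      have hm : ∀ (α) (hα), ((cfun α hα).1.subtype (· ∈ B)).map
          (Function.Embedding.subtype (· ∈ B)) = (cfun α hα).1 := by
        intro α hα
        rw [Finset.subtype_map]
        exact Finset.filter_true_of_mem (hBmem α hα)
      have := congrArg (fun s : Finset ↥B × ℕ =>
        s.1.map (Function.Embedding.subtype (· ∈ B))) hEq
      exact (hm a.1 a.2).symm.trans (this.trans (hm a'.1 a'.2))
    have h2 : (cfun a.1 a.2).2 = (cfun a'.1 a'.2).2 := by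
      have := congrArg Prod.snd hEq
      exact this
    exact Subtype.ext (hcinj a.1 a.2 a'.1 a'.2 (Prod.ext h1 h2))
  -- cardinality contradiction
  haveI hBinf : Infinite ↥B := Cardinal.infinite_iff.mpr (hBcard ▸ hκ)
  have htgt : #(Finset ↥B × ℕ) ≤ κ := by
    rw [Cardinal.mk_prod]
    simp only [Cardinal.mk_finset_of_infinite, Cardinal.mk_nat, Cardinal.lift_aleph0,
      Cardinal.lift_id', Cardinal.lift_id, hBcard]
    exact le_of_eq (Cardinal.mul_aleph0_eq hκ)
  have hsrc : #↥(Set.Iio ((Order.succ κ).ord)) = Cardinal.lift.{u+1} (Order.succ κ) := by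
    rw [Ordinal.mk_Iio_ordinal, Cardinal.card_ord]
  have hle := Cardinal.lift_mk_le'.mpr ⟨⟨e, he⟩⟩
  rw [hsrc, Cardinal.lift_lift] at hle
  have : Cardinal.lift.{u+1} (Order.succ κ) ≤ Cardinal.lift.{u+1} κ :=
    le_trans hle (Cardinal.lift_le.mpr htgt)
  rw [Cardinal.lift_le] at this
  exact absurd this (not_le.mpr (Order.lt_succ κ))
end Stab

/-! ### The fusion construction -/

section Fusion
open TopologicalSpace Metric

variable {X : Type u} [MetricSpace X] [CompleteSpace X] {r : ℕ → ℕ}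
variable {B : Set (Set X)} {U : ∀ n : ℕ, ℕ → Set (Fin (r n) → X)}
variable {R : ∀ n : ℕ, Set (Fin (r n) → X)}

theorem fusion (hB : TopologicalSpace.IsTopologicalBasis B)
    (hRU : ∀ n, R n = ⋂ m, U n m)
    {A : Set (Finset (Set X) × ℕ)} (hAsec : ∀ c ∈ A, SecCfg B U c)
    (hAstep : A ⊆ gstep A) (hAne : A.Nonempty) :
    ∃ P : Set X, IsPerfectSet P ∧ ∀ n, IsRelClique (R n) P := by
  classical
  have hch : ∀ c ∈ A, ∃ c', GDoub c c' ∧ c' ∈ A := fun c hc => (hAstep hc).2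
  let F : {c // c ∈ A} → {c // c ∈ A} :=
    fun p => ⟨(hch p.1 p.2).choose, (hch p.1 p.2).choose_spec.2⟩
  have hF : ∀ p : {c // c ∈ A}, GDoub p.1 (F p).1 := fun p => (hch p.1 p.2).choose_spec.1
  let d : ℕ → {c // c ∈ A} := fun k => F^[k] ⟨hAne.some, hAne.some_mem⟩
  have hdsucc : ∀ k, d (k+1) = F (d k) := fun k => Function.iterate_succ_apply' F k _
  have hd : ∀ k, GDoub (d k).1 (d (k+1)).1 := by
    intro k; rw [hdsucc k]; exact hF (d k)
  set s : ℕ → Finset (Set X) := fun k => ((d k).1).1 with hsdef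
  set L : ℕ → ℕ := fun k => ((d k).1).2 with hLdef
  have sec : ∀ k, SecCfg B U ((d k).1) := fun k => hAsec _ (d k).2
  have hLk : ∀ k, k ≤ L k := by
    intro k
    induction k with
    | zero => exact Nat.zero_le _
    | succ k ih =>
      have : L (k+1) = L k + 1 := (hd k).1
      omega
  have hBne : ∀ k, ∀ b ∈ s k, b.Nonempty := fun k b hb => ((sec k).2.1 b hb).2.1
  have hdisj : ∀ k, ∀ b ∈ s k, ∀ b' ∈ s k, b ≠ b' → closure b ∩ closure b' = ∅ :=
    fun k => (sec k).2.2.1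
  have hchild : ∀ k, ∀ b ∈ s k, ∃ b₁ ∈ s (k+1), ∃ b₂ ∈ s (k+1),
      b₁ ≠ b₂ ∧ closure b₁ ⊆ b ∧ closure b₂ ⊆ b := fun k => (hd k).2.2
  have hparent : ∀ k, ∀ b' ∈ s (k+1), ∃ b ∈ s k, closure b' ⊆ b := fun k => (hd k).2.1
  have hdiam : ∀ k, ∀ b ∈ s k, ∀ x y : X, x ∈ closure b → y ∈ closure b →
      dist x y ≤ 2 * (1/2)^k := by
    intro k b hb x y hx hy
    obtain ⟨z, hz⟩ := ((sec k).2.1 b hb).2.2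
    have hcl : closure b ⊆ closedBall z ((1/2)^(L k)) :=
      closure_minimal hz Metric.isClosed_closedBall
    have h1 : dist x z ≤ (1/2)^(L k) := Metric.mem_closedBall.mp (hcl hx)
    have h2 : dist y z ≤ (1/2)^(L k) := Metric.mem_closedBall.mp (hcl hy)
    have h3 : (1/2:ℝ)^(L k) ≤ (1/2)^k := by
      apply pow_le_pow_of_le_one <;> norm_num
      exact hLk k
    calc dist x y ≤ dist x z + dist z y := dist_triangle x z y
    _ = dist x z + dist y z := by rw [dist_comm z y]
    _ ≤ 2 * (1/2)^k := by linarith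
  set P : Set X := ⋂ i, ⋃ b ∈ (↑(s i) : Set (Set X)), closure b with hPdef
  -- descending chains give points of P
  have hcsel : ∀ k b, b ∈ s k → ∃ b', b' ∈ s (k+1) ∧ closure b' ⊆ b := by
    intro k b hb
    obtain ⟨b₁, h₁, b₂, h₂, _, h₅, _⟩ := hchild k b hb
    exact ⟨b₁, h₁, h₅⟩
  choose! ch1 hch1m hch1s using hcsel
  have hanc : ∀ (k' i : ℕ), i ≤ k' → ∀ b, b ∈ s k' → ∃ b', b' ∈ s i ∧ closure b ⊆ closure b' := by
    intro k'
    induction k' with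
    | zero =>
      intro i hi b hb
      rw [Nat.le_zero.mp hi]
      exact ⟨b, hb, subset_rfl⟩
    | succ k'' IH =>
      intro i hi b hb
      rcases Nat.eq_or_lt_of_le hi with rfl | hlt
      · exact ⟨b, hb, subset_rfl⟩
      · obtain ⟨b₀, hb₀, hsub⟩ := hparent k'' b hb
        obtain ⟨b', hb', hsub'⟩ := IH i (Nat.lt_succ_iff.mp hlt) b₀ hb₀
        exact ⟨b', hb', hsub.trans ((subset_closure).trans hsub')⟩
  have hreach : ∀ k b, b ∈ s k → ∃ x, x ∈ P ∧ x ∈ closure b := by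
    intro k b hb
    set g : ℕ → Set X := fun j => Nat.rec b (fun j' p => ch1 (k+j') p) j with hgdef
    have hg0 : g 0 = b := rfl
    have hgsucc : ∀ j, g (j+1) = ch1 (k+j) (g j) := fun j => rfl
    have hg : ∀ j, g j ∈ s (k+j) := by
      intro j
      induction j with
      | zero => exact hb
      | succ j ih => exact hch1m (k+j) (g j) ih
    have hgs : ∀ j, closure (g (j+1)) ⊆ g j := fun j => hch1s (k+j) (g j) (hg j)
    have hmono : ∀ j j', j ≤ j' → g j' ⊆ g j := by
      intro j j' h
      induction j' with
      | zero => rw [Nat.le_zero.mp h]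
      | succ j'' IH =>
        rcases Nat.eq_or_lt_of_le h with rfl | hlt
        · exact subset_rfl
        · exact (subset_closure.trans (hgs j'')).trans (IH (Nat.lt_succ_iff.mp hlt))
    have hptex : ∀ j, ∃ x, x ∈ g j := fun j => hBne (k+j) (g j) (hg j)
    choose pt hpt using hptex
    have hcauchy : CauchySeq pt := by
      apply cauchySeq_of_le_geometric (1/2) (2*(1/2)^k) (by norm_num)
      intro j
      have h1 : pt j ∈ closure (g j) := subset_closure (hpt j)
      have h2 : pt (j+1) ∈ closure (g j) := subset_closure ((subset_closure.trans (hgs j)) (hpt (j+1)))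
      have := hdiam (k+j) (g j) (hg j) (pt j) (pt (j+1)) h1 h2
      calc dist (pt j) (pt (j+1)) ≤ 2 * (1/2)^(k+j) := this
      _ = 2*(1/2)^k * (1/2)^j := by ring
    obtain ⟨x, hx⟩ := cauchySeq_tendsto_of_complete hcauchy
    have hxg : ∀ j, x ∈ closure (g j) := by
      intro j
      apply mem_closure_of_tendsto hx
      rw [Filter.eventually_atTop]
      exact ⟨j, fun j' hj' => hmono j j' hj' (hpt j')⟩
    refine ⟨x, ?_, by rw [← hg0]; exact hxg 0⟩
    rw [hPdef]
    refine mem_iInter.mpr fun i => ?_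
    rcases le_or_gt k i with hki | hik
    · have : g (i - k) ∈ s i := by
        have := hg (i - k)
        rwa [Nat.add_sub_cancel' hki] at this
      exact Set.mem_biUnion this (hxg (i-k))
    · obtain ⟨b', hb', hsub⟩ := hanc k i hik.le b hb
      exact Set.mem_biUnion hb' (hsub (by rw [← hg0]; exact hxg 0))
  -- boxes of points of P
  have hboxex : ∀ x, x ∈ P → ∀ k, ∃ b, b ∈ s k ∧ x ∈ closure b := by
    intro x hx k
    have := mem_iInter.mp hx k
    obtain ⟨b, hb, hxb⟩ := Set.mem_iUnion₂.mp this
    exact ⟨b, hb, hxb⟩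
  choose! bx hbxm hbxc using hboxex
  have huniq : ∀ (k : ℕ) (z : X) (b b' : Set X), b ∈ s k → b' ∈ s k →
      z ∈ closure b → z ∈ closure b' → b = b' := by
    intro k z b b' hb hb' hz hz'
    by_contra hne
    have := hdisj k b hb b' hb' hne
    exact absurd this (Set.nonempty_iff_ne_empty.mp ⟨z, hz, hz'⟩)
  have hcohere : ∀ x, x ∈ P → ∀ k, closure (bx x (k+1)) ⊆ bx x k := by
    intro x hx k
    obtain ⟨b₀, hb₀, hsub⟩ := hparent k (bx x (k+1)) (hbxm x hx (k+1))
    have : b₀ = bx x k :=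
      huniq k x b₀ (bx x k) hb₀ (hbxm x hx k)
        (subset_closure (hsub (hbxc x hx (k+1)))) (hbxc x hx k)
    rwa [this] at hsub
  -- P is closed, hence completely metrizable
  have hPclosed : IsClosed P := isClosed_iInter fun i =>
    Set.Finite.isClosed_biUnion (Finset.finite_toSet _) (fun _ _ => isClosed_closure)
  have hPne : P.Nonempty := by
    obtain ⟨b, hb⟩ := (sec 0).1
    obtain ⟨x, hx, _⟩ := hreach 0 b hb
    exact ⟨x, hx⟩
  have hPacc : ∀ x ∈ P, AccPt x (𝓟 P) := by
    intro x hx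
    rw [accPt_iff_nhds]
    intro V hV
    obtain ⟨ε, hε, hball⟩ := Metric.mem_nhds_iff.mp hV
    obtain ⟨k, hk⟩ := exists_pow_lt_of_lt_one (show (0:ℝ) < ε/2 by linarith)
      (show (1/2:ℝ) < 1 by norm_num)
    obtain ⟨b₁, h₁, b₂, h₂, hne12, hsub₁, hsub₂⟩ := hchild k (bx x k) (hbxm x hx k)
    have hex : ∃ c', c' ∈ s (k+1) ∧ closure c' ⊆ bx x k ∧ c' ≠ bx x (k+1) := by
      by_cases h : b₁ = bx x (k+1)
      · refine ⟨b₂, h₂, hsub₂, fun hEq => hne12 (h.trans hEq.symm)⟩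
      · exact ⟨b₁, h₁, hsub₁, h⟩
    obtain ⟨c', hc's, hc'sub, hc'ne⟩ := hex
    have hxnc : x ∉ closure c' := by
      intro hxc
      exact hc'ne (huniq (k+1) x c' (bx x (k+1)) hc's (hbxm x hx (k+1)) hxc (hbxc x hx (k+1)))
    obtain ⟨y, hyP, hyc⟩ := hreach (k+1) c' hc's
    have hyx : y ≠ x := fun hEq => hxnc (hEq ▸ hyc)
    have hdist : dist y x ≤ 2 * (1/2)^k :=
      hdiam k (bx x k) (hbxm x hx k) y x (subset_closure (hc'sub hyc)) (hbxc x hx k)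
    refine ⟨y, ⟨hball ?_, hyP⟩, hyx⟩
    rw [Metric.mem_ball]
    linarith
  have hCM : CompletelyMetrizable ↥P := ⟨Subtype.metricSpace, rfl, hPclosed.completeSpace_coe⟩
  refine ⟨P, ⟨hPne, hCM, hPacc⟩, ?_⟩
  -- P is a clique for every relation
  intro n
  intro y hyP hyinj
  rw [hRU n, mem_iInter]
  intro m
  -- separation of boxes
  have hsep2 : ∀ x x', x ∈ P → x' ∈ P → x ≠ x' → ∃ K, ∀ k, K ≤ k → bx x k ≠ bx x' k := by
    intro x x' hx hx' hne
    have hstep : ∀ k, bx x k ≠ bx x' k → bx x (k+1) ≠ bx x' (k+1) := by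
      intro k hne' hEq
      obtain ⟨z, hz⟩ := hBne (k+1) (bx x (k+1)) (hbxm x hx (k+1))
      have hz1 : z ∈ bx x k := hcohere x hx k (subset_closure hz)
      have hz2 : z ∈ bx x' k := by
        have := hcohere x' hx' k
        rw [← hEq] at this
        exact this (subset_closure hz)
      have := hdisj k (bx x k) (hbxm x hx k) (bx x' k) (hbxm x' hx' k) hne'
      exact absurd this (Set.nonempty_iff_ne_empty.mp
        ⟨z, subset_closure hz1, subset_closure hz2⟩)
    have hex : ∃ k, bx x k ≠ bx x' k := by
      by_contra hcon
      push_neg at hcon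
      obtain ⟨k, hk⟩ := exists_pow_lt_of_lt_one
        (show (0:ℝ) < dist x x' / 2 from by have := dist_pos.mpr hne; linarith)
        (show (1/2:ℝ) < 1 by norm_num)
      have := hdiam k (bx x k) (hbxm x hx k) x x' (hbxc x hx k)
        (by rw [hcon k]; exact hbxc x' hx' k)
      linarith
    obtain ⟨K, hK⟩ := hex
    refine ⟨K, fun k hk => ?_⟩
    induction k, hk using Nat.le_induction with
    | base => exact hK
    | succ k hk IH => exact hstep k IH
  have hKex : ∀ p : Fin (r n) × Fin (r n), ∃ K, p.1 ≠ p.2 →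
      ∀ k, K ≤ k → bx (y p.1) k ≠ bx (y p.2) k := by
    intro p
    by_cases h : p.1 = p.2
    · exact ⟨0, fun hne => absurd h hne⟩
    · obtain ⟨K, hK⟩ := hsep2 (y p.1) (y p.2) (hyP p.1) (hyP p.2)
        (fun hEq => h (hyinj hEq))
      exact ⟨K, fun _ => hK⟩
  choose Kf hKf using hKex
  set k : ℕ := max (Finset.univ.sup Kf) (max n m) with hkdef
  have hnk : n ≤ L k := le_trans (le_trans (le_max_left n m) (le_max_right _ _)) (hLk k)
  have hmk : m ≤ L k := le_trans (le_trans (le_max_right n m) (le_max_right _ _)) (hLk k)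
  refine (sec k).2.2.2 n m hnk hmk (fun i => bx (y i) k) ?_ (fun i => hbxm (y i) (hyP i) k)
    y (fun i => hbxc (y i) (hyP i) k)
  intro i j hij
  by_contra hne
  have hK : Kf (i, j) ≤ k :=
    le_trans (Finset.le_sup (Finset.mem_univ (i,j))) (le_max_left _ _)
  exact hKf (i,j) hne k hK hij
end Fusion

/-! ### Main theorem -/

section Main
open TopologicalSpace Metric

theorem main_metric {X : Type u} [MetricSpace X] [CompleteSpace X]
    (κ : Cardinal.{u}) (hκ : ℵ₀ ≤ κ) (hw : topWeight X = κ)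
    (r : ℕ → ℕ) (hr : ∀ n, 1 ≤ r n) (R : ∀ n : ℕ, Set (Fin (r n) → X))
    (hR : ∀ n, IsGδ (R n)) :
    Xor'
      (∃ γ : Ordinal.{u}, γ < (Order.succ κ).ord ∧
        ∀ S : Set X, (∀ n, IsRelClique (R n) S) → cbDeriv S γ = ∅)
      (∃ P : Set X, IsPerfectSet P ∧ ∀ n, IsRelClique (R n) P) := by
  classical
  -- a basis of minimal cardinality
  have hbne : Nonempty {B : Set (Set X) // TopologicalSpace.IsTopologicalBasis B} :=
    ⟨⟨{V | IsOpen V}, TopologicalSpace.isTopologicalBasis_opens⟩⟩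
  have hmem := csInf_mem (Set.range_nonempty
    (fun B : {B : Set (Set X) // TopologicalSpace.IsTopologicalBasis B} => Cardinal.mk ↥B.1))
  obtain ⟨Bb, hBb⟩ := hmem
  have hBcard : #↥Bb.1 = κ := by
    have h2 : sInf (Set.range
        (fun B : {B : Set (Set X) // TopologicalSpace.IsTopologicalBasis B} => Cardinal.mk ↥B.1))
        = topWeight X := rfl
    exact hBb.trans (h2.trans hw)
  set B := Bb.1 with hBdef
  have hB : TopologicalSpace.IsTopologicalBasis B := Bb.2
  -- the Gδ decompositions
  choose Ufun hUopen hRU using fun n => (hR n).eq_iInter_nat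
  -- stabilization point
  obtain ⟨γ₀, hγ₀lt, hstab⟩ := exists_stab B Ufun hκ hBcard
  by_cases hGE : Gfam B Ufun γ₀ = ∅
  · -- bounded rank case
    have hbound : ∀ S : Set X, (∀ n, IsRelClique (R n) S) → cbDeriv S γ₀ = ∅ := by
      intro S hS
      by_contra hne'
      obtain ⟨x, hx⟩ := Set.nonempty_iff_ne_empty.mpr hne'
      have hxS : x ∈ S := cbDeriv_subset S γ₀ hx
      obtain ⟨f, hinj, hfprop, hfsec⟩ := base_cfg hB hUopen hRU hS ({x} : Finset X)
        (Finset.singleton_nonempty x) (by simpa using hxS) (fun _ => univ)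
        (fun _ _ => isOpen_univ) (fun _ _ => mem_univ _) 0
      have hmem' := transfer_cfg hB hUopen hRU hS γ₀ _ hfsec (fun b hb => ?_)
      · rw [hGE] at hmem'
        exact hmem'
      · obtain ⟨z, hz, rfl⟩ := Finset.mem_image.mp hb
        have hzx : z = x := Finset.mem_singleton.mp hz
        subst hzx
        exact ⟨z, (hfprop z (Finset.mem_singleton_self z)).2.1, hx⟩
    refine Or.inl ⟨⟨γ₀, hγ₀lt, hbound⟩, ?_⟩
    rintro ⟨P, hP, hPcl⟩
    have h1 := hbound P hPcl
    rw [cbDeriv_of_accPt hP.2.2] at h1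
    exact hP.1.ne_empty h1
  · -- perfect clique case
    have hAsec : ∀ c ∈ Gfam B Ufun γ₀, SecCfg B Ufun c :=
      fun c hc => Gfam_subset_sec B Ufun γ₀ hc
    have hAstep : Gfam B Ufun γ₀ ⊆ gstep (Gfam B Ufun γ₀) := by
      intro c hc
      rw [← Gfam_succ, ← hstab]
      exact hc
    have hAne : (Gfam B Ufun γ₀).Nonempty := Set.nonempty_iff_ne_empty.mpr hGE
    obtain ⟨P, hP, hPcl⟩ := fusion hB hRU hAsec hAstep hAne
    refine Or.inr ⟨⟨P, hP, hPcl⟩, ?_⟩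
    rintro ⟨γ, _, hbound⟩
    have h1 := hbound P hPcl
    rw [cbDeriv_of_accPt hP.2.2] at h1
    exact hP.1.ne_empty h1
end Main

theorem statement1 {X : Type u} [TopologicalSpace X] (hX : CompletelyMetrizable X)
    (κ : Cardinal.{u}) (hκ : ℵ₀ ≤ κ) (hw : topWeight X = κ)
    (r : ℕ → ℕ) (hr : ∀ n, 1 ≤ r n) (R : ∀ n : ℕ, Set (Fin (r n) → X))
    (hR : ∀ n, IsGδ (R n)) :
    Xor'
      (∃ γ : Ordinal.{u}, γ < (Order.succ κ).ord ∧
        ∀ S : Set X, (∀ n, IsRelClique (R n) S) → cbDeriv S γ = ∅)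
      (∃ P : Set X, IsPerfectSet P ∧ ∀ n, IsRelClique (R n) P) := by
  obtain ⟨m, hm, hc⟩ := hX
  subst hm
  letI : MetricSpace X := m
  haveI : CompleteSpace X := hc
  exact main_metric κ hκ hw r hr R hR
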